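/- Let k be an algebraically closed field and A a finite-dimensional associative unital k-algebra. For every nonzero finite-dimensional left A-module X there exists a brick B (i.e. a module with End_A(B) ≅ k) which is simultaneously a quotient module of X and a submodule of X; concretely, one may take B to be the image of a nonzero endomorphism of X whose image has minimal k-dimension among images of nonzero endomorphisms of X. -/

import Mathlib

universe u v

open Module

/-- A finite-dimensional left module over the `k`-algebra `A`. -/
structure FDMod (k A : Type u) [Field k] [Ring A] [Algebra k A] : Type (u + 1) where
  carrier : Type u
  [addCommGroup : AddCommGroup carrier]
  [moduleK : Module k carrier]
  [moduleA : Module A carrier]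
  [tower : IsScalarTower k A carrier]
  [fd : FiniteDimensional k carrier]

attribute [instance] FDMod.addCommGroup FDMod.moduleK FDMod.moduleA FDMod.tower FDMod.fd

variable {k A : Type u} [Field k] [Ring A] [Algebra k A]

/-- `M` is a brick: `M ≠ 0` and every `A`-endomorphism of `M` is a `k`-scalar,
i.e. `End_A(M) ≅ k`. -/
def FDMod.IsBrick (M : FDMod k A) : Prop :=
  Nontrivial M.carrier ∧ ∀ f : M.carrier →ₗ[A] M.carrier, ∃ c : k, ∀ x : M.carrier, f x = c • x

/-- `M` and `N` are Hom-orthogonal: `Hom_A(M,N) = 0` and `Hom_A(N,M) = 0`. -/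
def FDMod.HomOrth (M N : FDMod k A) : Prop :=
  (∀ f : M.carrier →ₗ[A] N.carrier, f = 0) ∧ (∀ f : N.carrier →ₗ[A] M.carrier, f = 0)

/-- `M` and `N` are isomorphic as `A`-modules. -/
def FDMod.Iso (M N : FDMod k A) : Prop :=
  Nonempty (M.carrier ≃ₗ[A] N.carrier)

/-- A family of modules forms a Hom-orthogonal set: the modules are nonzero,
pairwise non-isomorphic and pairwise Hom-orthogonal. -/
def HomOrthFamily {I : Type v} (X : I → FDMod k A) : Prop :=
  (∀ i, Nontrivial (X i).carrier) ∧
  (∀ i j, i ≠ j → ¬(X i).Iso (X j)) ∧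
  (∀ i j, i ≠ j → (X i).HomOrth (X j))

/-- `A` is brick-finite: there are only finitely many isomorphism classes of bricks. -/
def BrickFinite (k A : Type u) [Field k] [Ring A] [Algebra k A] : Prop :=
  ∃ (m : ℕ) (f : Fin m → FDMod k A), ∀ N : FDMod k A, N.IsBrick → ∃ i, N.Iso (f i)

/-- `A` has rank `n`: there are exactly `n` isomorphism classes of simple modules. -/
def HasRank (k A : Type u) [Field k] [Ring A] [Algebra k A] (n : ℕ) : Prop :=
  ∃ S : Fin n → FDMod k A,
    (∀ i, IsSimpleModule A (S i).carrier) ∧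
    (∀ i j, i ≠ j → ¬(S i).Iso (S j)) ∧
    (∀ T : FDMod k A, IsSimpleModule A T.carrier → ∃ i, T.Iso (S i))

/-- Over an algebraically closed field `k` and a finite-dimensional
`k`-algebra `A`, every nonzero finite-dimensional `A`-module `X` has a brick `B`
which is simultaneously a quotient and a submodule of `X`; concretely, `B` is the
image of a nonzero endomorphism of `X` whose image has minimal `k`-dimension among
the images of nonzero endomorphisms of `X`. -/
theorem stmt0 {k A : Type u} [Field k] [IsAlgClosed k] [Ring A] [Algebra k A]
    [FiniteDimensional k A] (X : FDMod k A) (hX : Nontrivial X.carrier) :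
    ∃ (B : FDMod k A) (f : X.carrier →ₗ[A] X.carrier)
      (π : X.carrier →ₗ[A] B.carrier) (ι : B.carrier →ₗ[A] X.carrier),
      B.IsBrick ∧
      -- `f` is a nonzero endomorphism of `X`
      f ≠ 0 ∧
      -- whose image has minimal dimension among images of nonzero endomorphisms
      (∀ g : X.carrier →ₗ[A] X.carrier, g ≠ 0 →
        finrank k (LinearMap.range (f.restrictScalars k)) ≤
          finrank k (LinearMap.range (g.restrictScalars k))) ∧
      -- and `B` is the image of `f`: `f` factors as a surjection onto `B`
      -- followed by an injection back into `X`; in particular `B` is both a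
      -- quotient module and a submodule of `X`
      Function.Surjective π ∧ Function.Injective ι ∧ ι ∘ₗ π = f := by
  haveI := IsScalarTower.to_smulCommClass (R := k) (A := A) (M := X.carrier)
  -- the set of dimensions of images of nonzero endomorphisms
  set S : Set ℕ := {n | ∃ g : X.carrier →ₗ[A] X.carrier, g ≠ 0 ∧
      finrank k (LinearMap.range (g.restrictScalars k)) = n} with hS
  have hSne : S.Nonempty := by
    refine ⟨finrank k (LinearMap.range ((LinearMap.id (M := X.carrier) (R := A)).restrictScalars k)), LinearMap.id, ?_, rfl⟩
    intro h
    obtain ⟨x, hx⟩ := exists_ne (0 : X.carrier)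
    exact hx (by simpa using congrArg (fun φ => φ x) h)
  obtain ⟨f, hf0, hfdim⟩ : sInf S ∈ S := Nat.sInf_mem hSne
  have hmin : ∀ g : X.carrier →ₗ[A] X.carrier, g ≠ 0 →
      finrank k (LinearMap.range (f.restrictScalars k)) ≤
        finrank k (LinearMap.range (g.restrictScalars k)) := by
    intro g hg
    rw [hfdim]
    exact Nat.sInf_le ⟨g, hg, rfl⟩
  -- B is the image of f
  let R : Submodule A X.carrier := LinearMap.range f
  haveI : FiniteDimensional k ↥R :=
    FiniteDimensional.of_injective (R.subtype.restrictScalars k) Subtype.val_injective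
  let B : FDMod k A := ⟨↥R⟩
  let π : X.carrier →ₗ[A] B.carrier := f.rangeRestrict
  let ι : B.carrier →ₗ[A] X.carrier := R.subtype
  have hπ : Function.Surjective π := f.surjective_rangeRestrict
  have hι : Function.Injective ι := Subtype.val_injective
  have hcomp : ι ∘ₗ π = f := LinearMap.ext fun x => rfl
  haveI hBnt : Nontrivial B.carrier := by
    obtain ⟨x, hx⟩ : ∃ x, f x ≠ 0 := by
      by_contra h
      push_neg at h
      exact hf0 (LinearMap.ext fun x => by simpa using h x)
    exact ⟨⟨π x, 0, fun h => hx (by have h' := congrArg Subtype.val h; exact h')⟩⟩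
  -- key: any nonzero A-endomorphism of B is injective
  have key : ∀ g : B.carrier →ₗ[A] B.carrier, g ≠ 0 → Function.Injective g := by
    intro g hg
    set h : X.carrier →ₗ[A] X.carrier := ι ∘ₗ g ∘ₗ π with hh
    have hh0 : h ≠ 0 := by
      intro h0
      apply hg
      ext b
      obtain ⟨x, rfl⟩ := hπ b
      have := congrArg (fun φ => φ x) h0
      simp only [hh, LinearMap.comp_apply, LinearMap.zero_apply] at this
      have h2 : g (π x) = 0 := hι (show ι (g (π x)) = ι 0 by simpa using this)
      simp [h2]
    -- range of h as k-submodule equals (g.range mapped under ι)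
    have hle : finrank k (LinearMap.range (h.restrictScalars k)) ≤
        finrank k (LinearMap.range (g.restrictScalars k)) := by
      have : LinearMap.range (h.restrictScalars k) =
          Submodule.map (ι.restrictScalars k) (LinearMap.range (g.restrictScalars k)) := by
        apply le_antisymm
        · rintro _ ⟨x, rfl⟩
          exact ⟨g (π x), ⟨π x, rfl⟩, rfl⟩
        · rintro _ ⟨_, ⟨b, rfl⟩, rfl⟩
          obtain ⟨x, rfl⟩ := hπ b
          exact ⟨x, rfl⟩
      rw [this]
      have e := Submodule.equivMapOfInjective (ι.restrictScalars k) hι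
        (LinearMap.range (g.restrictScalars k))
      exact le_of_eq (e.finrank_eq).symm
    have hge : finrank k B.carrier ≤ finrank k (LinearMap.range (g.restrictScalars k)) := by
      have hB : finrank k (LinearMap.range (f.restrictScalars k)) = finrank k B.carrier := by
        have : LinearMap.range (f.restrictScalars k) = R.restrictScalars k := by
          ext x; rfl
        rw [this]; rfl
      calc finrank k B.carrier = finrank k (LinearMap.range (f.restrictScalars k)) := hB.symm
        _ ≤ finrank k (LinearMap.range (h.restrictScalars k)) := hmin h hh0
        _ ≤ finrank k (LinearMap.range (g.restrictScalars k)) := hle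
    have hsurj : Function.Surjective g := by
      have : LinearMap.range (g.restrictScalars k) = ⊤ :=
        Submodule.eq_top_of_finrank_eq (le_antisymm (Submodule.finrank_le _) hge)
      intro b
      have : b ∈ LinearMap.range (g.restrictScalars k) := this ▸ Submodule.mem_top
      obtain ⟨x, hx⟩ := this
      exact ⟨x, hx⟩
    exact (LinearMap.injective_iff_surjective (f := g.restrictScalars k)).mpr hsurj
  -- conclude B is a brick
  haveI := IsScalarTower.to_smulCommClass (R := k) (A := A) (M := B.carrier)
  have hbrick : B.IsBrick := by
    refine ⟨hBnt, fun g => ?_⟩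
    obtain ⟨c, hc⟩ := Module.End.exists_eigenvalue (g.restrictScalars k : Module.End k B.carrier)
    obtain ⟨x, hx⟩ := hc.exists_hasEigenvector
    have hgx : g x = c • x := hx.apply_eq_smul
    have hx0 : x ≠ 0 := hx.right
    refine ⟨c, fun y => ?_⟩
    set g' : B.carrier →ₗ[A] B.carrier := g - c • LinearMap.id with hg'
    have hg'0 : g' = 0 := by
      by_contra hne
      have hinj := key g' hne
      have : g' x = 0 := by
        simp only [hg', LinearMap.sub_apply, LinearMap.smul_apply, LinearMap.id_apply]
        rw [hgx]
        simp
      exact hx0 (hinj (by simpa using this))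
    have := congrArg (fun φ => φ y) hg'0
    simp only [hg', LinearMap.sub_apply, LinearMap.smul_apply, LinearMap.id_apply,
      LinearMap.zero_apply, sub_eq_zero] at this
    exact this
  exact ⟨B, f, π, ι, hbrick, hf0, hmin, hπ, hι, hcomp⟩
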